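/- Let M = M₁ ×_f M₂ be a warped product of semi-Riemannian manifolds with metric g = g₁ + f²g₂, and let W = W₁ + W₂ be a 2-Killing vector field on M with W_i tangent to M_i. Then W₁ is the potential vector field of a second Ricci soliton (M₁, g₁, W₁, λ) if and only if (M₁, g₁) is Einstein with Ric₁ = λ g₁. -/

import Mathlib

/-!
STATEMENT 13. Let `M = M₁ ×_f M₂` be a warped product of semi-Riemannian
manifolds with metric `g = g₁ + f²g₂`, and let `W = W₁ + W₂` be a 2-Killing
vector field on `M` (`𝓛_W 𝓛_W g = 0`) with `Wᵢ` tangent to `Mᵢ`.  Then `W₁`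
is the potential vector field of a second Ricci soliton `(M₁, g₁, W₁, λ)`
(`𝓛_{W₁}𝓛_{W₁}g₁ + Ric₁ = λ g₁`) if and only if `(M₁, g₁)` is Einstein with
`Ric₁ = λ g₁`.

The 2-Killing condition is expressed through the decomposition
`(𝓛_W𝓛_W g)(U,V) = (𝓛_{W₁}𝓛_{W₁}g₁)(U₁,V₁) + f²(𝓛_{W₂}𝓛_{W₂}g₂)(U₂,V₂)
  + 2W₁(f²)(𝓛_{W₂}g₂)(U₂,V₂) + W₁(W₁(f²)) g₂(U₂,V₂)`,
where `W₁(h)` denotes the directional derivative `mfderiv h (W₁)` on `M₁`.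
-/

open Manifold

noncomputable section

theorem warped_product_two_killing_first_factor_soliton_iff_einstein
    -- the base (M₁, g₁)
    {E₁ : Type*} [NormedAddCommGroup E₁] [NormedSpace ℝ E₁]
    {H₁ : Type*} [TopologicalSpace H₁] {I₁ : ModelWithCorners ℝ E₁ H₁}
    {M₁ : Type*} [TopologicalSpace M₁] [ChartedSpace H₁ M₁]
    [IsManifold I₁ (⊤ : ℕ∞) M₁]
    -- the fibre (M₂, g₂)
    {E₂ : Type*} [NormedAddCommGroup E₂] [NormedSpace ℝ E₂]
    {H₂ : Type*} [TopologicalSpace H₂] {I₂ : ModelWithCorners ℝ E₂ H₂}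
    {M₂ : Type*} [TopologicalSpace M₂] [ChartedSpace H₂ M₂]
    [IsManifold I₂ (⊤ : ℕ∞) M₂] [Nonempty M₂]
    -- the warping function `f : M₁ → ℝ⁺`
    (f : M₁ → ℝ) (hf_pos : ∀ x, 0 < f x) (hf : ContMDiff I₁ 𝓘(ℝ, ℝ) (⊤ : ℕ∞) f)
    -- metrics, Ricci curvature of `g₁`, and (iterated) Lie derivative tensors
    (g₁ Ric₁ LL₁ : ∀ x : M₁, TangentSpace I₁ x → TangentSpace I₁ x → ℝ)
    (g₂ LWg₂ LL₂ : ∀ y : M₂, TangentSpace I₂ y → TangentSpace I₂ y → ℝ)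
    -- `Wᵢ` tangent to `Mᵢ`
    (W₁ : ∀ x : M₁, TangentSpace I₁ x) (W₂ : ∀ y : M₂, TangentSpace I₂ y)
    -- `W₁(f²)` and `W₁(W₁(f²))` on `M₁`
    (W1f2 W1W1f2 : M₁ → ℝ)
    (hW1f2 : ∀ x, W1f2 x =
      (show ℝ from mfderiv I₁ 𝓘(ℝ, ℝ) (fun y => (f y) ^ 2) x (W₁ x)))
    (hW1W1f2 : ∀ x, W1W1f2 x =
      (show ℝ from mfderiv I₁ 𝓘(ℝ, ℝ) W1f2 x (W₁ x)))
    -- the tensors on `M₂` are bilinear, in particular they vanish on zero vectors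
    (hLL₂_zero : ∀ y : M₂, LL₂ y 0 0 = 0)
    (hLWg₂_zero : ∀ y : M₂, LWg₂ y 0 0 = 0)
    (hg₂_zero : ∀ y : M₂, g₂ y 0 0 = 0)
    (lambda : ℝ)
    -- `W = W₁ + W₂` is 2-Killing on `M₁ ×_f M₂`: `𝓛_W 𝓛_W g = 0`, expressed
    -- through the warped-product decomposition of `𝓛_W 𝓛_W g`
    (h2Killing : ∀ (x : M₁) (y : M₂) (u₁ v₁ : TangentSpace I₁ x)
      (u₂ v₂ : TangentSpace I₂ y),
      LL₁ x u₁ v₁ + (f x) ^ 2 * LL₂ y u₂ v₂ + 2 * W1f2 x * LWg₂ y u₂ v₂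
        + W1W1f2 x * g₂ y u₂ v₂ = 0) :
    -- `(M₁, g₁, W₁, λ)` is a second Ricci soliton iff `(M₁, g₁)` is Einstein
    (∀ (x : M₁) (u v : TangentSpace I₁ x),
        LL₁ x u v + Ric₁ x u v = lambda * g₁ x u v) ↔
      ∀ (x : M₁) (u v : TangentSpace I₁ x), Ric₁ x u v = lambda * g₁ x u v := by
  have hLL1 : ∀ (x : M₁) (u v : TangentSpace I₁ x), LL₁ x u v = 0 := by
    intro x u v
    have h := h2Killing x (Classical.arbitrary M₂) u v 0 0
    rw [hLL₂_zero, hLWg₂_zero, hg₂_zero] at h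
    linarith
  constructor
  · intro h x u v
    have := h x u v
    rw [hLL1] at this
    linarith
  · intro h x u v
    rw [hLL1, h]
    ring
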